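/- Let d be a positive integer and γ ∈ (0, ∞). Let (M, dist) be a compact metric space with diameter D ∈ (0, ∞), let ν be a Borel probability measure on M satisfying ν(B(x,r)) ≥ c₀·r^d for all x ∈ M and all 0 < r < D, for some constant c₀ > 0, and let μ be a finite Borel measure on M. Let X_1, X_2, … be i.i.d. random variables with law ν. Then there exists a constant C > 0 such that for every positive integer n: E[ ∫_M dist(x, {X_1, …, X_n})^γ dμ(x) ] ≤ C·n^{−γ/d}. -/

import Mathlib

set_option maxHeartbeats 1000000


open MeasureTheory Metric ProbabilityTheory

/-- expected `γ`-distortion of `n` i.i.d. points whose law satisfies a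
lower Ahlfors bound is at most `C · n^{-γ/d}`. -/
theorem expected_distortion_upper_bound
    {Ω : Type*} [MeasurableSpace Ω] (Pr : Measure Ω) [IsProbabilityMeasure Pr]
    {M : Type*} [MetricSpace M] [CompactSpace M] [MeasurableSpace M] [BorelSpace M]
    (d : ℕ) (hd : 0 < d) (γ : ℝ) (hγ : 0 < γ)
    (hdiam : 0 < diam (Set.univ : Set M))
    (ν : Measure M) [IsProbabilityMeasure ν]
    (c₀ : ℝ) (hc₀ : 0 < c₀)
    (hlower : ∀ (x : M) (r : ℝ), 0 < r → r < diam (Set.univ : Set M) →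
      c₀ * r ^ d ≤ (ν (ball x r)).toReal)
    (μ : Measure M) [IsFiniteMeasure μ]
    (X : ℕ → Ω → M) (hXmeas : ∀ i, Measurable (X i))
    (hXlaw : ∀ i, Measure.map (X i) Pr = ν)
    (hXindep : iIndepFun X Pr) :
    ∃ C : ℝ, 0 < C ∧ ∀ n : ℕ, 0 < n →
      ∫⁻ ω, (∫⁻ x, (ENNReal.ofReal (infDist x ((fun i => X i ω) '' Set.Iio n))) ^ γ ∂μ) ∂Pr
        ≤ ENNReal.ofReal (C * (n : ℝ) ^ (-γ / d)) := by
  have hdR : (0:ℝ) < (d:ℝ) := by exact_mod_cast hd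
  have hd1 : (1:ℝ) ≤ (d:ℝ) := by exact_mod_cast hd
  have hΓ : 0 < Real.Gamma (γ / d) := Real.Gamma_pos_of_pos (by positivity)
  set D := diam (Set.univ : Set M) with hDdef
  set K : ℝ := (1 / (d:ℝ)) * Real.Gamma (γ / (d:ℝ)) with hKdef
  have hK : 0 < K := by positivity
  refine ⟨((μ Set.univ).toReal + 1) * (γ * (c₀ ^ (-γ / (d:ℝ)) * K)), by positivity, ?_⟩
  intro n hn
  have hnR : (0:ℝ) < (n:ℝ) := by exact_mod_cast hn
  have hb : (0:ℝ) < c₀ * n := by positivity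
  -- the nonempty image set
  have hSne : ∀ ω : Ω, ((fun i => X i ω) '' Set.Iio n).Nonempty :=
    fun ω => ⟨X 0 ω, ⟨0, hn, rfl⟩⟩
  -- rewrite the integrand via `edist`-infima
  have hkey : ∀ (ω : Ω) (x : M),
      (ENNReal.ofReal (infDist x ((fun i => X i ω) '' Set.Iio n))) ^ γ
        = (⨅ i ∈ Set.Iio n, edist x (X i ω)) ^ γ := by
    intro ω x
    congr 1
    rw [Metric.infDist, ENNReal.ofReal_toReal (Metric.infEdist_ne_top (hSne ω)),
      Metric.infEDist, iInf_image]
  -- joint measurability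
  have hGm : Measurable (Function.uncurry
      (fun ω x => (⨅ i ∈ Set.Iio n, edist x (X i ω)) ^ γ : Ω → M → ENNReal)) := by
    apply Measurable.pow_const
    apply Measurable.iInf
    intro i
    apply Measurable.iInf
    intro _
    exact continuous_edist.measurable.comp
      (measurable_snd.prodMk ((hXmeas i).comp measurable_fst))
  -- per-x expectation bound
  have perx : ∀ x : M, (∫⁻ ω, (⨅ i ∈ Set.Iio n, edist x (X i ω)) ^ γ ∂Pr)
      ≤ ENNReal.ofReal (γ * ((c₀ * n) ^ (-γ / (d:ℝ)) * K)) := by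
    intro x
    set f : Ω → ℝ := fun ω => infDist x ((fun i => X i ω) '' Set.Iio n) with hfdef
    have hf_nn : ∀ ω, 0 ≤ f ω := fun ω => infDist_nonneg
    have hf_eq : ∀ ω, (⨅ i ∈ Set.Iio n, edist x (X i ω)) ^ γ
        = ENNReal.ofReal (f ω ^ γ) := by
      intro ω
      rw [← hkey ω x, ENNReal.ofReal_rpow_of_nonneg (hf_nn ω) hγ.le]
    have hf_mble : Measurable f := by
      have hfe : f = fun ω => (⨅ i ∈ Set.Iio n, edist x (X i ω)).toReal := by
        funext ω
        rw [hfdef]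
        simp only [Metric.infDist, Metric.infEDist, iInf_image]
      rw [hfe]
      apply Measurable.ennreal_toReal
      apply Measurable.iInf
      intro i
      apply Measurable.iInf
      intro _
      exact (Continuous.edist continuous_const continuous_id).measurable.comp (hXmeas i)
    -- tail estimate
    have tail : ∀ t : ℝ, t ∈ Set.Ioi (0:ℝ) →
        Pr {ω | t < f ω} ≤ ENNReal.ofReal (Real.exp (-(c₀ * n) * t ^ (d:ℝ))) := by
      intro t ht
      rw [Set.mem_Ioi] at ht
      rcases lt_or_ge t D with htD | htD
      · have hsub : {ω | t < f ω} ⊆ ⋂ i ∈ Finset.range n, (X i) ⁻¹' (ball x t)ᶜ := by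
          intro ω hω
          simp only [Set.mem_setOf_eq] at hω
          simp only [Set.mem_iInter, Set.mem_preimage, Set.mem_compl_iff, mem_ball]
          intro i hi hlt
          have hmem : X i ω ∈ (fun j => X j ω) '' Set.Iio n :=
            ⟨i, Finset.mem_range.mp hi, rfl⟩
          have h1 : f ω ≤ dist x (X i ω) := infDist_le_dist_of_mem hmem
          rw [dist_comm] at h1
          linarith
        have hstep : (1 : ENNReal) - ν (ball x t)
            ≤ ENNReal.ofReal (Real.exp (-(c₀ * t ^ (d:ℝ)))) := by
          have h1 : ENNReal.ofReal (c₀ * t ^ (d:ℝ)) ≤ ν (ball x t) := by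
            rw [← ENNReal.ofReal_toReal (measure_ne_top ν (ball x t))]
            apply ENNReal.ofReal_le_ofReal
            rw [Real.rpow_natCast]
            exact hlower x t ht htD
          calc (1 : ENNReal) - ν (ball x t)
              ≤ 1 - ENNReal.ofReal (c₀ * t ^ (d:ℝ)) := tsub_le_tsub_left h1 1
            _ = ENNReal.ofReal (1 - c₀ * t ^ (d:ℝ)) := by
                rw [ENNReal.ofReal_sub _ (by positivity), ENNReal.ofReal_one]
            _ ≤ ENNReal.ofReal (Real.exp (-(c₀ * t ^ (d:ℝ)))) := by
                apply ENNReal.ofReal_le_ofReal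
                have := Real.add_one_le_exp (-(c₀ * t ^ (d:ℝ)))
                linarith
        calc Pr {ω | t < f ω}
            ≤ Pr (⋂ i ∈ Finset.range n, (X i) ⁻¹' (ball x t)ᶜ) := measure_mono hsub
          _ = ∏ i ∈ Finset.range n, Pr ((X i) ⁻¹' (ball x t)ᶜ) :=
              hXindep.meas_biInter (fun i _ => ⟨(ball x t)ᶜ, measurableSet_ball.compl, rfl⟩)
          _ = ∏ i ∈ Finset.range n, ((1 : ENNReal) - ν (ball x t)) := by
              refine Finset.prod_congr rfl fun i _ => ?_
              have hPrim : Pr ((X i) ⁻¹' (ball x t)ᶜ) = ν (ball x t)ᶜ := by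
                rw [← hXlaw i, Measure.map_apply (hXmeas i) measurableSet_ball.compl]
              rw [hPrim, prob_compl_eq_one_sub measurableSet_ball]
          _ = ((1 : ENNReal) - ν (ball x t)) ^ n := by
              rw [Finset.prod_const, Finset.card_range]
          _ ≤ (ENNReal.ofReal (Real.exp (-(c₀ * t ^ (d:ℝ))))) ^ n :=
              pow_le_pow_left' hstep n
          _ = ENNReal.ofReal (Real.exp (-(c₀ * n) * t ^ (d:ℝ))) := by
              rw [← ENNReal.ofReal_pow (Real.exp_nonneg _), ← Real.exp_nat_mul]
              congr 1
              ring_nf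
      · have hempty : {ω | t < f ω} = ∅ := by
          ext ω
          simp only [Set.mem_setOf_eq, Set.mem_empty_iff_false, iff_false, not_lt]
          calc f ω ≤ dist x (X 0 ω) := infDist_le_dist_of_mem ⟨0, hn, rfl⟩
            _ ≤ D := dist_le_diam_of_mem isCompact_univ.isBounded trivial trivial
            _ ≤ t := htD
        rw [hempty, measure_empty]
        exact zero_le
    -- the Gamma-type integral
    have hInt : IntegrableOn (fun t : ℝ => t ^ (γ - 1) * Real.exp (-(c₀ * n) * t ^ (d:ℝ)))
        (Set.Ioi 0) := integrableOn_rpow_mul_exp_neg_mul_rpow (by linarith) hdR hb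
    have hIntval : (∫ t in Set.Ioi (0:ℝ), t ^ (γ - 1) * Real.exp (-(c₀ * n) * t ^ (d:ℝ)))
        = (c₀ * n) ^ (-γ / (d:ℝ)) * K := by
      rw [integral_rpow_mul_exp_neg_mul_rpow hdR (by linarith) hb, hKdef]
      norm_num
      ring_nf
    calc (∫⁻ ω, (⨅ i ∈ Set.Iio n, edist x (X i ω)) ^ γ ∂Pr)
        = ∫⁻ ω, ENNReal.ofReal (f ω ^ γ) ∂Pr := by
          apply lintegral_congr; intro ω; exact hf_eq ω
      _ = ENNReal.ofReal γ * ∫⁻ t in Set.Ioi 0,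
            Pr {a | t < f a} * ENNReal.ofReal (t ^ (γ - 1)) :=
          lintegral_rpow_eq_lintegral_meas_lt_mul Pr (ae_of_all _ hf_nn)
            hf_mble.aemeasurable hγ
      _ ≤ ENNReal.ofReal γ * ∫⁻ t in Set.Ioi 0,
            ENNReal.ofReal (t ^ (γ - 1) * Real.exp (-(c₀ * n) * t ^ (d:ℝ))) := by
          apply mul_le_mul_right
          apply setLIntegral_mono
          · apply Measurable.ennreal_ofReal
            exact (measurable_id.pow_const (γ - 1)).mul
              ((measurable_const.mul (measurable_id.pow_const (d:ℝ))).exp)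
          · intro t ht
            calc Pr {a | t < f a} * ENNReal.ofReal (t ^ (γ - 1))
                ≤ ENNReal.ofReal (Real.exp (-(c₀ * n) * t ^ (d:ℝ)))
                    * ENNReal.ofReal (t ^ (γ - 1)) :=
                  mul_le_mul_left (tail t ht) _
              _ = ENNReal.ofReal (t ^ (γ - 1) * Real.exp (-(c₀ * n) * t ^ (d:ℝ))) := by
                  rw [← ENNReal.ofReal_mul (Real.exp_nonneg _)]
                  rw [mul_comm]
      _ = ENNReal.ofReal γ * ENNReal.ofReal ((c₀ * n) ^ (-γ / (d:ℝ)) * K) := by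
          rw [← ofReal_integral_eq_lintegral_ofReal hInt]
          · rw [hIntval]
          · filter_upwards [self_mem_ae_restrict (measurableSet_Ioi (a := (0:ℝ)))] with t ht
            have ht' : (0:ℝ) < t := ht
            positivity
      _ ≤ ENNReal.ofReal (γ * ((c₀ * n) ^ (-γ / (d:ℝ)) * K)) := by
          rw [ENNReal.ofReal_mul hγ.le]
  -- put everything together
  calc ∫⁻ ω, (∫⁻ x, (ENNReal.ofReal (infDist x ((fun i => X i ω) '' Set.Iio n))) ^ γ ∂μ) ∂Pr
      = ∫⁻ ω, (∫⁻ x, (⨅ i ∈ Set.Iio n, edist x (X i ω)) ^ γ ∂μ) ∂Pr := by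
        apply lintegral_congr; intro ω
        apply lintegral_congr; intro x
        exact hkey ω x
    _ = ∫⁻ x, (∫⁻ ω, (⨅ i ∈ Set.Iio n, edist x (X i ω)) ^ γ ∂Pr) ∂μ :=
        lintegral_lintegral_swap hGm.aemeasurable
    _ ≤ ∫⁻ _x, ENNReal.ofReal (γ * ((c₀ * n) ^ (-γ / (d:ℝ)) * K)) ∂μ :=
        lintegral_mono fun x => perx x
    _ = ENNReal.ofReal (γ * ((c₀ * n) ^ (-γ / (d:ℝ)) * K)) * μ Set.univ :=
        lintegral_const _
    _ ≤ ENNReal.ofReal (((μ Set.univ).toReal + 1) * (γ * (c₀ ^ (-γ / (d:ℝ)) * K))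
          * (n:ℝ) ^ (-γ / (d:ℝ))) := by
        rw [← ENNReal.ofReal_toReal (measure_ne_top μ Set.univ),
          ← ENNReal.ofReal_mul (by positivity)]
        apply ENNReal.ofReal_le_ofReal
        have hsplit : (c₀ * n) ^ (-γ / (d:ℝ)) = c₀ ^ (-γ / (d:ℝ)) * (n:ℝ) ^ (-γ / (d:ℝ)) :=
          Real.mul_rpow hc₀.le hnR.le
        rw [hsplit]
        have hμnn : (0:ℝ) ≤ (μ Set.univ).toReal := ENNReal.toReal_nonneg
        have hfac : (0:ℝ) ≤ γ * (c₀ ^ (-γ / (d:ℝ)) * K) * (n:ℝ) ^ (-γ / (d:ℝ)) := by positivity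
        rw [ENNReal.toReal_ofReal hμnn]
        nlinarith [hfac]
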